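/- For a nonnegative polynomial p that is a sum of squares, the minimum possible rank of an sos representation of p equals the sos rank of p, i.e., the minimum number N of squares in any representation p = sum_{k=1}^N p_k^2. -/

import Mathlib

open MvPolynomial Matrix

lemma key_sum {n m r : ℕ} (C : Matrix (Fin m) (Fin r) ℝ)
    (e : Fin r → MvPolynomial (Fin n) ℝ) :
    ∑ i, (∑ j, C i j • e j) ^ 2 = ∑ j, ∑ l, (Cᴴ * C) j l • (e j * e l) := by
  simp only [sq, Finset.sum_mul_sum, Matrix.mul_apply, Matrix.conjTranspose_apply,
    star_trivial, Finset.sum_smul, smul_mul_smul_comm, smul_smul]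
  rw [Finset.sum_comm]
  refine Finset.sum_congr rfl fun j _ => ?_
  rw [Finset.sum_comm]

lemma reduce_to_rank {n N : ℕ} (q : Fin N → MvPolynomial (Fin n) ℝ) :
    ∃ s : Fin (Module.finrank ℝ (Submodule.span ℝ (Set.range q))) →
        MvPolynomial (Fin n) ℝ, ∑ i, (s i) ^ 2 = ∑ k, (q k) ^ 2 := by
  classical
  set V := Submodule.span ℝ (Set.range q) with hV
  haveI : FiniteDimensional ℝ V := FiniteDimensional.span_of_finite ℝ (Set.finite_range q)
  haveI : Module.Free ℝ V := Module.Free.of_divisionRing ℝ V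
  set r := Module.finrank ℝ V with hr
  let b : Module.Basis (Fin r) ℝ V := Module.finBasis ℝ V
  have hq : ∀ k, q k ∈ V := fun k => Submodule.subset_span (Set.mem_range_self k)
  let A : Matrix (Fin N) (Fin r) ℝ := fun k j => b.repr ⟨q k, hq k⟩ j
  have hqA : ∀ k, q k = ∑ j, A k j • (b j : MvPolynomial (Fin n) ℝ) := by
    intro k
    have := congrArg (Subtype.val) (b.sum_repr ⟨q k, hq k⟩)
    simp only [Submodule.coe_sum, Submodule.coe_smul] at this
    exact this.symm
  have hG : (Aᴴ * A).PosSemidef := Matrix.posSemidef_conjTranspose_mul_self A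
  obtain ⟨B, hB⟩ : ∃ B : Matrix (Fin r) (Fin r) ℝ, Aᴴ * A = Bᴴ * B := by
    open scoped MatrixOrder Matrix.Norms.L2Operator in
    obtain ⟨B, hB⟩ := CStarAlgebra.nonneg_iff_eq_star_mul_self.mp hG.nonneg
    exact ⟨B, hB⟩
  refine ⟨fun i => ∑ j, B i j • (b j : MvPolynomial (Fin n) ℝ), ?_⟩
  have h2 : ∑ k, (q k) ^ 2
      = ∑ k, (∑ j, A k j • (b j : MvPolynomial (Fin n) ℝ)) ^ 2 :=
    Finset.sum_congr rfl fun k _ => by rw [hqA k]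
  rw [key_sum B, ← hB, h2, key_sum A]

theorem rmin_eq_sosRank (n : ℕ) (p : MvPolynomial (Fin n) ℝ)
    (hpos : ∀ x : Fin n → ℝ, 0 ≤ eval x p)
    (hsos : ∃ (N : ℕ) (q : Fin N → MvPolynomial (Fin n) ℝ), p = ∑ k, (q k) ^ 2) :
    sInf {r : ℕ | ∃ (N : ℕ) (q : Fin N → MvPolynomial (Fin n) ℝ),
        p = ∑ k, (q k) ^ 2 ∧
        r = Module.finrank ℝ (Submodule.span ℝ (Set.range q))} =
    sInf {N : ℕ | ∃ q : Fin N → MvPolynomial (Fin n) ℝ, p = ∑ k, (q k) ^ 2} := by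
  obtain ⟨N₀, q₀, hq₀⟩ := hsos
  apply le_antisymm
  · -- min rank ≤ min N
    have h2 : sInf {N : ℕ | ∃ q : Fin N → MvPolynomial (Fin n) ℝ, p = ∑ k, (q k) ^ 2} ∈
        {N : ℕ | ∃ q : Fin N → MvPolynomial (Fin n) ℝ, p = ∑ k, (q k) ^ 2} :=
      Nat.sInf_mem ⟨N₀, q₀, hq₀⟩
    obtain ⟨q, hq⟩ := h2
    refine le_trans (Nat.sInf_le ⟨_, q, hq, rfl⟩) ?_
    have := finrank_range_le_card (R := ℝ) q
    simpa [Set.finrank] using this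
  · -- min N ≤ min rank
    have h1 : sInf {r : ℕ | ∃ (N : ℕ) (q : Fin N → MvPolynomial (Fin n) ℝ),
        p = ∑ k, (q k) ^ 2 ∧
        r = Module.finrank ℝ (Submodule.span ℝ (Set.range q))} ∈
        {r : ℕ | ∃ (N : ℕ) (q : Fin N → MvPolynomial (Fin n) ℝ),
        p = ∑ k, (q k) ^ 2 ∧
        r = Module.finrank ℝ (Submodule.span ℝ (Set.range q))} :=
      Nat.sInf_mem ⟨_, N₀, q₀, hq₀, rfl⟩
    obtain ⟨N, q, hq, hrank⟩ := h1
    obtain ⟨s, hs⟩ := reduce_to_rank q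
    rw [hrank]
    exact Nat.sInf_le ⟨s, by rw [hq, hs]⟩
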